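/- The symmetric Pascal matrix P(n) is conjugate to its inverse P(n)^{-1} over the rationals. -/

import Mathlib

open Finset Matrix

lemma natA (n i j : ℕ) (hi : i < n) :
    ∑ k ∈ range n, i.choose k * j.choose k = (i + j).choose i := by
  symm
  calc (i + j).choose i
      = ∑ k ∈ range (i + 1), i.choose k * j.choose (i - k) := by
        rw [Nat.add_choose_eq, Finset.Nat.sum_antidiagonal_eq_sum_range_succ_mk]
    _ = ∑ k ∈ range (i + 1), i.choose (i - k) * j.choose (i - (i - k)) := by
        rw [← Finset.sum_range_reflect]; simp
    _ = ∑ k ∈ range (i + 1), i.choose k * j.choose k := by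
        refine Finset.sum_congr rfl fun k hk => ?_
        simp only [mem_range] at hk
        rw [Nat.choose_symm (by omega), Nat.sub_sub_self (by omega)]
    _ = ∑ k ∈ range n, i.choose k * j.choose k := by
        refine Finset.sum_subset (by intro k hk; simp at hk ⊢; omega) fun k _ hk => ?_
        simp only [mem_range] at hk
        simp [Nat.choose_eq_zero_of_lt (show i < k by omega)]

lemma qB (n i j : ℕ) (hi : i < n) :
    ∑ k ∈ range n, ((-1 : ℚ) ^ k * i.choose k) * ((-1) ^ j * k.choose j) =
      if i = j then 1 else 0 := by
  have halt : ∀ m : ℕ, ∑ k ∈ range (m + 1), ((-1 : ℚ) ^ k * m.choose k) =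
      if m = 0 then 1 else 0 := by
    intro m
    have h := congrArg (fun z : ℤ => (z : ℚ)) (Int.alternating_sum_range_choose (n := m))
    push_cast at h
    simpa using h
  calc ∑ k ∈ range n, ((-1 : ℚ) ^ k * i.choose k) * ((-1) ^ j * k.choose j)
      = ∑ k ∈ Icc j i, ((-1 : ℚ) ^ k * i.choose k) * ((-1) ^ j * k.choose j) := by
        refine (Finset.sum_subset (by intro k hk; simp at hk ⊢; omega) fun k hk hk' => ?_).symm
        simp only [mem_range] at hk
        simp only [mem_Icc, not_and_or, not_le] at hk'
        rcases hk' with h | h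
        · simp [Nat.choose_eq_zero_of_lt h]
        · simp [Nat.choose_eq_zero_of_lt h]
    _ = ∑ m ∈ range (i + 1 - j), ((-1 : ℚ) ^ (j + m) * i.choose (j + m)) *
          ((-1) ^ j * (j + m).choose j) := by
        rw [← Finset.Ico_add_one_right_eq_Icc, Finset.sum_Ico_eq_sum_range]
    _ = if i = j then 1 else 0 := by
        rcases lt_or_ge i j with h | h
        · rw [show i + 1 - j = 0 by omega]
          simp [Nat.ne_of_lt h]
        · have key : ∀ m ∈ range (i + 1 - j),
              ((-1 : ℚ) ^ (j + m) * i.choose (j + m)) * ((-1) ^ j * (j + m).choose j) =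
              (i.choose j : ℚ) * ((-1) ^ m * (i - j).choose m) := by
            intro m hm
            simp only [mem_range] at hm
            have h1 : j + m ≤ i := by omega
            have h2 : i.choose (j + m) * (j + m).choose j = i.choose j * (i - j).choose m := by
              have := Nat.choose_mul (n := i) (k := j + m) (s := j) (Nat.le_add_right _ _)
              simpa using this
            have h2q : (i.choose (j + m) : ℚ) * (j + m).choose j
                = (i.choose j : ℚ) * (i - j).choose m := by exact_mod_cast h2
            have hs : ((-1 : ℚ)) ^ j * (-1) ^ j = 1 := by
              rw [← pow_add, ← two_mul, pow_mul]; norm_num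
            rw [pow_add]
            linear_combination ((-1 : ℚ) ^ m * (i.choose (j + m)) * ((j + m).choose j)) * hs
              + (-1 : ℚ) ^ m * h2q
          rw [Finset.sum_congr rfl key, ← Finset.mul_sum,
            show i + 1 - j = (i - j) + 1 by omega, halt]
          rcases eq_or_lt_of_le h with h' | h'
          · simp [h'.symm, show i - j = 0 by omega]
          · rw [if_neg (by omega), if_neg (by omega), mul_zero]

/-- The symmetric Pascal matrix `P(n)` is conjugate over `ℚ` to its inverse. -/
theorem symm_pascal_conjugate_inverse (n : ℕ) :
    ∃ S : Matrix (Fin n) (Fin n) ℚ, IsUnit S.det ∧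
      (Matrix.of fun i j : Fin n => ((Nat.choose (i + j) i : ℚ)))⁻¹ =
        S * (Matrix.of fun i j : Fin n => ((Nat.choose (i + j) i : ℚ))) * S⁻¹ := by
  set P : Matrix (Fin n) (Fin n) ℚ :=
    Matrix.of fun i j : Fin n => ((Nat.choose (i + j) i : ℚ)) with hPdef
  set S : Matrix (Fin n) (Fin n) ℚ :=
    Matrix.of fun i j : Fin n => (-1 : ℚ) ^ (j : ℕ) * ((i : ℕ).choose j) with hSdef
  have hS : S * S = 1 := by
    ext i j
    rw [Matrix.mul_apply, Matrix.one_apply]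
    have h := qB n i j i.isLt
    rw [← Fin.sum_univ_eq_sum_range
      (fun k => ((-1 : ℚ) ^ k * (i : ℕ).choose k) * ((-1) ^ (j : ℕ) * k.choose j))] at h
    simp only [hSdef, Matrix.of_apply]
    rw [h]
    simp [Fin.ext_iff]
  have hP : P = S * Sᵀ := by
    ext i j
    rw [Matrix.mul_apply]
    simp only [hPdef, hSdef, Matrix.of_apply, Matrix.transpose_apply]
    have h : ∀ k : Fin n, ((-1 : ℚ) ^ (k : ℕ) * ((i : ℕ).choose k)) *
        ((-1 : ℚ) ^ (k : ℕ) * ((j : ℕ).choose k)) =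
        (((i : ℕ).choose k : ℚ) * ((j : ℕ).choose k)) := by
      intro k
      have : ((-1 : ℚ)) ^ (k : ℕ) * (-1) ^ (k : ℕ) = 1 := by
        rw [← pow_add, ← two_mul, pow_mul]; norm_num
      linear_combination (((i : ℕ).choose k : ℚ) * ((j : ℕ).choose k)) * this
    rw [Finset.sum_congr rfl fun k _ => h k,
      Fin.sum_univ_eq_sum_range (fun k => (((i : ℕ).choose k : ℚ) * ((j : ℕ).choose k)))]
    exact_mod_cast (natA n i j i.isLt).symm
  have hT : Sᵀ * Sᵀ = 1 := by
    have h := congrArg Matrix.transpose hS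
    rwa [Matrix.transpose_mul, Matrix.transpose_one] at h
  have hdet : IsUnit S.det := by
    refine IsUnit.of_mul_eq_one S.det ?_
    rw [← Matrix.det_mul, hS, Matrix.det_one]
  have hSinv : S⁻¹ = S := Matrix.inv_eq_left_inv hS
  refine ⟨S, hdet, ?_⟩
  rw [hSinv]
  refine Matrix.inv_eq_left_inv ?_
  rw [hP, show S * (S * Sᵀ) * S * (S * Sᵀ) = (S * S) * (Sᵀ * ((S * S) * Sᵀ)) by noncomm_ring,
    hS, Matrix.one_mul, Matrix.one_mul, hT]
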